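/- The Killing-type form (A,B) := (2/n)·trace(AB) − (2/n²)·trace(A)·trace(B) on n×n matrices is invariant under the equivalence ∼: if A₁ ∈ M_{r×r}, B₁ ∈ M_{s×s}, and A = A₁ ⊗ I_p, B = B₁ ⊗ I_q with pr = qs = n, then (A,B) computed on M_{n×n} equals (2/t)·trace(A₁ ⋉ B₁) − (2/(rs))·trace(A₁)trace(B₁) with t = lcm(r,s). -/

import Mathlib

open Matrix

/-- Kronecker product of real matrices, reindexed to `Fin`-indexed matrices. -/
noncomputable def kronF {m n p q : ℕ} (A : Matrix (Fin m) (Fin n) ℝ)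
    (B : Matrix (Fin p) (Fin q) ℝ) : Matrix (Fin (m * p)) (Fin (n * q)) ℝ :=
  Matrix.reindex finProdFinEquiv finProdFinEquiv (Matrix.kroneckerMap (· * ·) A B)


theorem lcm_div_eq (n p : ℕ) : n * (Nat.lcm n p / n) = p * (Nat.lcm n p / p) := by
  rw [Nat.mul_div_cancel' (Nat.dvd_lcm_left n p), Nat.mul_div_cancel' (Nat.dvd_lcm_right n p)]

/-- The left semi-tensor product `A ⋉ B := (A ⊗ I_{t/n})(B ⊗ I_{t/p})`, `t = lcm n p`. -/
noncomputable def stp {m n p q : ℕ} (A : Matrix (Fin m) (Fin n) ℝ)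
    (B : Matrix (Fin p) (Fin q) ℝ) :
    Matrix (Fin (m * (Nat.lcm n p / n))) (Fin (q * (Nat.lcm n p / p))) ℝ :=
  (kronF A (1 : Matrix (Fin (Nat.lcm n p / n)) (Fin (Nat.lcm n p / n)) ℝ)) *
    (Matrix.reindex (finCongr (lcm_div_eq n p).symm) (Equiv.refl _)
      (kronF B (1 : Matrix (Fin (Nat.lcm n p / p)) (Fin (Nat.lcm n p / p)) ℝ)))

/-- Square-shaped version of the STP of square matrices. -/
noncomputable def stpSq {r s : ℕ} (A : Matrix (Fin r) (Fin r) ℝ) (B : Matrix (Fin s) (Fin s) ℝ) :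
    Matrix (Fin (r * (Nat.lcm r s / r))) (Fin (r * (Nat.lcm r s / r))) ℝ :=
  Matrix.reindex (Equiv.refl _) (finCongr (lcm_div_eq r s).symm) (stp A B)

/-! ### Auxiliary machinery -/

/-- Extension of a `Fin`-indexed matrix to a function on `ℕ` (junk value `0` out of range). -/
noncomputable def extM' (r : ℕ) (A : Matrix (Fin r) (Fin r) ℝ) : ℕ → ℕ → ℝ :=
  fun i j => if h : i < r ∧ j < r then A ⟨i, h.1⟩ ⟨j, h.2⟩ else 0

/-- The canonical `ℕ`-valued double sum to which both traces reduce. -/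
noncomputable def Wsum (r s p q : ℕ) (A : Matrix (Fin r) (Fin r) ℝ)
    (B : Matrix (Fin s) (Fin s) ℝ) : ℝ :=
  ∑ i ∈ Finset.range (r * p), ∑ j ∈ Finset.range (r * p),
    if i % p = j % p ∧ i % q = j % q then
      extM' r A (i / p) (j / p) * extM' s B (j / q) (i / q) else 0

lemma kronF_one_apply {r p : ℕ} (A : Matrix (Fin r) (Fin r) ℝ) (i j : Fin (r * p)) :
    kronF A (1 : Matrix (Fin p) (Fin p) ℝ) i j
      = if (i : ℕ) % p = (j : ℕ) % p then extM' r A ((i : ℕ) / p) ((j : ℕ) / p) else 0 := by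
  have hA : A i.divNat j.divNat = extM' r A ((i : ℕ) / p) ((j : ℕ) / p) := by
    rw [extM', dif_pos ⟨by simpa [Fin.coe_divNat] using i.divNat.isLt,
      by simpa [Fin.coe_divNat] using j.divNat.isLt⟩]
    congr 1
  have hsymm : finProdFinEquiv.symm i = (i.divNat, i.modNat) := rfl
  have hsymm' : finProdFinEquiv.symm j = (j.divNat, j.modNat) := rfl
  rw [kronF]
  simp only [Matrix.reindex_apply, Matrix.submatrix_apply, hsymm, hsymm',
    Matrix.kroneckerMap_apply, Matrix.one_apply]
  rw [hA]
  by_cases hmod : (i : ℕ) % p = (j : ℕ) % p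
  · rw [if_pos hmod, if_pos (by ext; simpa [Fin.coe_modNat] using hmod), mul_one]
  · rw [if_neg hmod, if_neg (by
      intro hc; exact hmod (by simpa [Fin.coe_modNat] using congrArg Fin.val hc)), mul_zero]

lemma trace_kronF_one {r p : ℕ} (A : Matrix (Fin r) (Fin r) ℝ) :
    Matrix.trace (kronF A (1 : Matrix (Fin p) (Fin p) ℝ)) = (p : ℝ) * Matrix.trace A := by
  rw [Matrix.trace]
  rw [← Equiv.sum_comp finProdFinEquiv (fun i : Fin (r * p) => (kronF A 1).diag i)]
  rw [Fintype.sum_prod_type]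
  have : ∀ (a : Fin r) (c : Fin p),
      (kronF A (1 : Matrix (Fin p) (Fin p) ℝ)).diag (finProdFinEquiv (a, c)) = A a a := by
    intro a c
    have h : finProdFinEquiv.symm (finProdFinEquiv (a, c)) = (a, c) :=
      Equiv.symm_apply_apply _ _
    simp [Matrix.diag, kronF, Matrix.reindex_apply, Matrix.submatrix_apply, h,
      Matrix.kroneckerMap_apply]
  simp_rw [this]
  simp only [Finset.sum_const, Finset.card_univ, Fintype.card_fin, nsmul_eq_mul]
  rw [← Finset.mul_sum]
  rfl

lemma sum_range_mul (T m : ℕ) (h : ℕ → ℝ) :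
    ∑ i ∈ Finset.range (T * m), h i
      = ∑ a ∈ Finset.range T, ∑ c ∈ Finset.range m, h (c + m * a) := by
  rw [← Fin.sum_univ_eq_sum_range]
  rw [← Equiv.sum_comp finProdFinEquiv (fun i : Fin (T * m) => h i.val)]
  rw [Fintype.sum_prod_type]
  have : ∀ (a : Fin T) (c : Fin m), ((finProdFinEquiv (a, c) : Fin (T * m)) : ℕ)
      = (c : ℕ) + m * (a : ℕ) := fun a c => rfl
  simp_rw [this]
  rw [← Fin.sum_univ_eq_sum_range (fun a => ∑ c ∈ Finset.range m, h (c + m * a))]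
  congr 1; ext a
  rw [← Fin.sum_univ_eq_sum_range (fun c => h (c + m * a))]

lemma modHelper (p m a c : ℕ) (hm : c < m) : (c + m * a) % (p * m) = c + m * (a % p) := by
  rcases Nat.eq_zero_or_pos p with hp | hp
  · simp [hp]
  · conv_lhs => rw [show c + m * a = c + m * (a % p) + (p * m) * (a / p) by
      rw [mul_comm p m, mul_assoc, add_assoc, ← Nat.mul_add, Nat.mod_add_div]]
    rw [Nat.add_mul_mod_self_left]
    apply Nat.mod_eq_of_lt
    calc c + m * (a % p) < m + m * (a % p) := by omega
      _ = m * (a % p + 1) := by ring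
      _ ≤ m * p := Nat.mul_le_mul_left m (Nat.mod_lt a hp)
      _ = p * m := mul_comm m p

lemma divHelper (p m a c : ℕ) (hm : c < m) : (c + m * a) / (p * m) = a / p := by
  rcases Nat.eq_zero_or_pos p with hp | hp
  · simp [hp]
  · conv_lhs => rw [show c + m * a = c + m * (a % p) + (p * m) * (a / p) by
      rw [mul_comm p m, mul_assoc, add_assoc, ← Nat.mul_add, Nat.mod_add_div]]
    rw [Nat.add_mul_div_left _ _ (Nat.mul_pos hp (by omega))]
    rw [Nat.div_eq_of_lt, Nat.zero_add]
    calc c + m * (a % p) < m + m * (a % p) := by omega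
      _ = m * (a % p + 1) := by ring
      _ ≤ m * p := Nat.mul_le_mul_left m (Nat.mod_lt a hp)
      _ = p * m := mul_comm m p

lemma eqHelper (p m a b c d : ℕ) (hm : 0 < m) (hc : c < m) (hd : d < m) :
    (c + m * (a % p) = d + m * (b % p)) ↔ (c = d ∧ a % p = b % p) := by
  constructor
  · intro he
    have h1 : (c + m * (a % p)) % m = (d + m * (b % p)) % m := by rw [he]
    simp only [Nat.add_mul_mod_self_left] at h1
    rw [Nat.mod_eq_of_lt hc, Nat.mod_eq_of_lt hd] at h1
    subst h1
    exact ⟨rfl, Nat.eq_of_mul_eq_mul_left hm (by omega)⟩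
  · rintro ⟨rfl, he⟩; rw [he]

lemma combKey (r s p' q' m : ℕ) (hm : 0 < m) (A : Matrix (Fin r) (Fin r) ℝ)
    (B : Matrix (Fin s) (Fin s) ℝ) :
    Wsum r s (p' * m) (q' * m) A B = (m : ℝ) * Wsum r s p' q' A B := by
  unfold Wsum
  rw [show r * (p' * m) = (r * p') * m from (mul_assoc r p' m).symm]
  rw [sum_range_mul (r * p') m]
  rw [Finset.mul_sum]
  refine Finset.sum_congr rfl ?_
  intro a _
  calc ∑ c ∈ Finset.range m, ∑ j ∈ Finset.range (r * p' * m),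
        (if (c + m * a) % (p' * m) = j % (p' * m) ∧ (c + m * a) % (q' * m) = j % (q' * m) then
          extM' r A ((c + m * a) / (p' * m)) (j / (p' * m)) *
            extM' s B (j / (q' * m)) ((c + m * a) / (q' * m)) else 0)
      = ∑ c ∈ Finset.range m, ∑ b ∈ Finset.range (r * p'), ∑ d ∈ Finset.range m,
        (if (c + m * a) % (p' * m) = (d + m * b) % (p' * m) ∧
            (c + m * a) % (q' * m) = (d + m * b) % (q' * m) then
          extM' r A ((c + m * a) / (p' * m)) ((d + m * b) / (p' * m)) *
            extM' s B ((d + m * b) / (q' * m)) ((c + m * a) / (q' * m)) else 0) := by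
        refine Finset.sum_congr rfl fun c _ => ?_
        exact sum_range_mul (r * p') m _
    _ = ∑ b ∈ Finset.range (r * p'), ∑ c ∈ Finset.range m, ∑ d ∈ Finset.range m,
        (if c = d then (if a % p' = b % p' ∧ a % q' = b % q' then
          extM' r A (a / p') (b / p') * extM' s B (b / q') (a / q') else 0) else 0) := by
        rw [Finset.sum_comm]
        refine Finset.sum_congr rfl fun b _ => ?_
        refine Finset.sum_congr rfl fun c hc => ?_
        refine Finset.sum_congr rfl fun d hd => ?_
        have hc' : c < m := Finset.mem_range.mp hc
        have hd' : d < m := Finset.mem_range.mp hd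
        rw [modHelper p' m a c hc', modHelper p' m b d hd',
          modHelper q' m a c hc', modHelper q' m b d hd',
          divHelper p' m a c hc', divHelper p' m b d hd',
          divHelper q' m a c hc', divHelper q' m b d hd']
        have hiff : (c + m * (a % p') = d + m * (b % p') ∧
            c + m * (a % q') = d + m * (b % q')) ↔
            (c = d ∧ (a % p' = b % p' ∧ a % q' = b % q')) := by
          rw [eqHelper p' m a b c d hm hc' hd', eqHelper q' m a b c d hm hc' hd']; tauto
        simp only [hiff, ite_and]
    _ = (m : ℝ) * ∑ b ∈ Finset.range (r * p'),
        (if a % p' = b % p' ∧ a % q' = b % q' then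
          extM' r A (a / p') (b / p') * extM' s B (b / q') (a / q') else 0) := by
        rw [Finset.mul_sum]
        refine Finset.sum_congr rfl fun b _ => ?_
        rw [Finset.sum_congr rfl fun c hc => Finset.sum_ite_eq (Finset.range m) c _]
        rw [Finset.sum_congr rfl fun c hc => if_pos hc]
        rw [Finset.sum_const, Finset.card_range, nsmul_eq_mul, mul_ite, mul_zero]

lemma sum_form {r s p q : ℕ} (h : r * p = s * q) (A : Matrix (Fin r) (Fin r) ℝ)
    (B : Matrix (Fin s) (Fin s) ℝ) :
    ∑ i : Fin (r * p), ∑ j : Fin (r * p),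
      kronF A (1 : Matrix (Fin p) (Fin p) ℝ) i j *
        kronF B (1 : Matrix (Fin q) (Fin q) ℝ) (Fin.cast h j) (Fin.cast h i)
      = Wsum r s p q A B := by
  have key : ∀ i j : Fin (r * p),
      kronF A (1 : Matrix (Fin p) (Fin p) ℝ) i j *
        kronF B (1 : Matrix (Fin q) (Fin q) ℝ) (Fin.cast h j) (Fin.cast h i)
      = (if (i : ℕ) % p = (j : ℕ) % p ∧ (i : ℕ) % q = (j : ℕ) % q then
          extM' r A ((i : ℕ) / p) ((j : ℕ) / p) * extM' s B ((j : ℕ) / q) ((i : ℕ) / q)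
          else 0) := by
    intro i j
    rw [kronF_one_apply, kronF_one_apply]
    simp only [Fin.coe_cast]
    by_cases h1 : (i : ℕ) % p = (j : ℕ) % p <;> by_cases h2 : (i : ℕ) % q = (j : ℕ) % q
    · rw [if_pos h1, if_pos h2.symm, if_pos ⟨h1, h2⟩]
    · rw [if_pos h1, if_neg (fun hh => h2 hh.symm),
        if_neg (fun hc : _ ∧ _ => h2 hc.2), mul_zero]
    · rw [if_neg h1, if_pos h2.symm, if_neg (fun hc : _ ∧ _ => h1 hc.1), zero_mul]
    · rw [if_neg h1, if_neg (fun hh => h2 hh.symm),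
        if_neg (fun hc : _ ∧ _ => h1 hc.1), zero_mul]
  calc ∑ i : Fin (r * p), ∑ j : Fin (r * p),
        kronF A (1 : Matrix (Fin p) (Fin p) ℝ) i j *
          kronF B (1 : Matrix (Fin q) (Fin q) ℝ) (Fin.cast h j) (Fin.cast h i)
      = ∑ i : Fin (r * p), ∑ j : Fin (r * p),
        (if (i : ℕ) % p = (j : ℕ) % p ∧ (i : ℕ) % q = (j : ℕ) % q then
          extM' r A ((i : ℕ) / p) ((j : ℕ) / p) * extM' s B ((j : ℕ) / q) ((i : ℕ) / q)
          else 0) :=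
        Finset.sum_congr rfl fun i _ => Finset.sum_congr rfl fun j _ => key i j
    _ = ∑ i : Fin (r * p), ∑ j ∈ Finset.range (r * p),
        (if (i : ℕ) % p = j % p ∧ (i : ℕ) % q = j % q then
          extM' r A ((i : ℕ) / p) (j / p) * extM' s B (j / q) ((i : ℕ) / q) else 0) :=
        Finset.sum_congr rfl fun i _ => Fin.sum_univ_eq_sum_range
          (fun j => if (i : ℕ) % p = j % p ∧ (i : ℕ) % q = j % q then
            extM' r A ((i : ℕ) / p) (j / p) * extM' s B (j / q) ((i : ℕ) / q) else 0) (r * p)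
    _ = Wsum r s p q A B :=
        Fin.sum_univ_eq_sum_range (fun i => ∑ j ∈ Finset.range (r * p),
          if i % p = j % p ∧ i % q = j % q then
            extM' r A (i / p) (j / p) * extM' s B (j / q) (i / q) else 0) (r * p)

lemma trace_eq {r s p q : ℕ} (h : r * p = s * q) (A : Matrix (Fin r) (Fin r) ℝ)
    (B : Matrix (Fin s) (Fin s) ℝ) :
    Matrix.trace (kronF A (1 : Matrix (Fin p) (Fin p) ℝ) *
        Matrix.reindex (finCongr h.symm) (finCongr h.symm)
          (kronF B (1 : Matrix (Fin q) (Fin q) ℝ)))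
      = Wsum r s p q A B := by
  rw [← sum_form h A B]
  simp only [Matrix.trace, Matrix.diag, Matrix.mul_apply, Matrix.reindex_apply,
    Matrix.submatrix_apply, finCongr_symm]
  rfl

lemma trace_stp {r s : ℕ} (A : Matrix (Fin r) (Fin r) ℝ) (B : Matrix (Fin s) (Fin s) ℝ) :
    Matrix.trace (stpSq A B)
      = Wsum r s (Nat.lcm r s / r) (Nat.lcm r s / s) A B := by
  rw [← sum_form (lcm_div_eq r s) A B]
  unfold stpSq stp
  simp only [Matrix.trace, Matrix.diag, Matrix.reindex_apply, Matrix.submatrix_apply,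
    Matrix.mul_apply, Equiv.refl_symm, Equiv.refl_apply, finCongr_symm]
  rfl

theorem killing_form_invariant {r s p q : ℕ} (hp : 0 < p) (hq : 0 < q)
    (A₁ : Matrix (Fin r) (Fin r) ℝ) (B₁ : Matrix (Fin s) (Fin s) ℝ)
    (h : r * p = s * q) :
    2 / ((r * p : ℕ) : ℝ) * Matrix.trace (kronF A₁ (1 : Matrix (Fin p) (Fin p) ℝ) *
          Matrix.reindex (finCongr h.symm) (finCongr h.symm)
            (kronF B₁ (1 : Matrix (Fin q) (Fin q) ℝ))) -
        2 / ((r * p : ℕ) : ℝ) ^ 2 *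
          (Matrix.trace (kronF A₁ (1 : Matrix (Fin p) (Fin p) ℝ)) *
            Matrix.trace (kronF B₁ (1 : Matrix (Fin q) (Fin q) ℝ))) =
      2 / (Nat.lcm r s : ℝ) * Matrix.trace (stpSq A₁ B₁) -
        2 / ((r : ℝ) * s) * (Matrix.trace A₁ * Matrix.trace B₁) := by
  rcases Nat.eq_zero_or_pos r with hr | hr
  · subst hr
    have hs : s = 0 := by
      have h0 : s * q = 0 := by rw [← h, Nat.zero_mul]
      rcases Nat.mul_eq_zero.mp h0 with h' | h'
      · exact h'
      · omega
    subst hs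
    haveI h1 : IsEmpty (Fin (0 * p)) := by rw [Nat.zero_mul]; infer_instance
    haveI h2 : IsEmpty (Fin (0 * (Nat.lcm 0 0 / 0))) := by rw [Nat.zero_mul]; infer_instance
    rw [show Matrix.trace (stpSq A₁ B₁) = 0 from by
      simp [Matrix.trace, Finset.univ_eq_empty]]
    rw [show Matrix.trace (kronF A₁ (1 : Matrix (Fin p) (Fin p) ℝ) *
          Matrix.reindex (finCongr h.symm) (finCongr h.symm)
            (kronF B₁ (1 : Matrix (Fin q) (Fin q) ℝ))) = 0 from by
      simp [Matrix.trace, Finset.univ_eq_empty]]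
    rw [show Matrix.trace (kronF A₁ (1 : Matrix (Fin p) (Fin p) ℝ)) = 0 from by
      simp [Matrix.trace, Finset.univ_eq_empty]]
    rw [show Matrix.trace A₁ = 0 from by simp [Matrix.trace, Finset.univ_eq_empty]]
    ring
  have hs : 0 < s := by
    rcases Nat.eq_zero_or_pos s with hs0 | hs0
    · exfalso; rw [hs0, Nat.zero_mul] at h; exact absurd h (Nat.mul_pos hr hp).ne'
    · exact hs0
  have ht : 0 < Nat.lcm r s := Nat.pos_of_ne_zero (Nat.lcm_ne_zero hr.ne' hs.ne')
  have htd : Nat.lcm r s ∣ r * p := Nat.lcm_dvd (Dvd.intro p rfl) (h ▸ Dvd.intro q rfl)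
  have hn : r * p = Nat.lcm r s * (r * p / Nat.lcm r s) := (Nat.mul_div_cancel' htd).symm
  have hm : 0 < r * p / Nat.lcm r s := by
    rcases Nat.eq_zero_or_pos (r * p / Nat.lcm r s) with hm0 | hm0
    · exfalso; rw [hm0, Nat.mul_zero] at hn; exact absurd hn (Nat.mul_pos hr hp).ne'
    · exact hm0
  have hp' : p = (Nat.lcm r s / r) * (r * p / Nat.lcm r s) := by
    have h1 : r * ((Nat.lcm r s / r) * (r * p / Nat.lcm r s)) = r * p := by
      rw [← mul_assoc, Nat.mul_div_cancel' (Nat.dvd_lcm_left r s), ← hn]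
    exact (Nat.eq_of_mul_eq_mul_left hr h1).symm
  have hq' : q = (Nat.lcm r s / s) * (r * p / Nat.lcm r s) := by
    have h1 : s * ((Nat.lcm r s / s) * (r * p / Nat.lcm r s)) = s * q := by
      rw [← mul_assoc, Nat.mul_div_cancel' (Nat.dvd_lcm_right r s), ← hn, h]
    exact (Nat.eq_of_mul_eq_mul_left hs h1).symm
  rw [trace_eq h A₁ B₁, trace_kronF_one, trace_kronF_one, trace_stp A₁ B₁]
  rw [show Wsum r s p q A₁ B₁ = Wsum r s ((Nat.lcm r s / r) * (r * p / Nat.lcm r s))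
      ((Nat.lcm r s / s) * (r * p / Nat.lcm r s)) A₁ B₁ by rw [← hp', ← hq']]
  rw [combKey r s (Nat.lcm r s / r) (Nat.lcm r s / s) (r * p / Nat.lcm r s) hm A₁ B₁]
  have e1 : ((r * p : ℕ) : ℝ) = (Nat.lcm r s : ℝ) * ((r * p / Nat.lcm r s : ℕ) : ℝ) := by
    rw [← Nat.cast_mul, ← hn]
  have e2 : (r : ℝ) * p = (s : ℝ) * q := by exact_mod_cast h
  rw [e1]
  have e3 : (Nat.lcm r s : ℝ) * ((r * p / Nat.lcm r s : ℕ) : ℝ) = (r : ℝ) * p := by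
    rw [← e1]; push_cast; ring
  have hte : (Nat.lcm r s : ℝ) ≠ 0 := Nat.cast_ne_zero.mpr ht.ne'
  have hme : ((r * p / Nat.lcm r s : ℕ) : ℝ) ≠ 0 := Nat.cast_ne_zero.mpr hm.ne'
  have hre : (r : ℝ) ≠ 0 := Nat.cast_ne_zero.mpr hr.ne'
  have hse : (s : ℝ) ≠ 0 := Nat.cast_ne_zero.mpr hs.ne'
  field_simp
  ring_nf
  linear_combination (((Nat.lcm r s : ℝ) * ((r * p / Nat.lcm r s : ℕ) : ℝ) + (r : ℝ) * p) *
    Matrix.trace A₁ * Matrix.trace B₁) * e3 + ((r : ℝ) * p * Matrix.trace A₁ * Matrix.trace B₁) * e2
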